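/- Let F be a field and q ∈ F a nonzero element with q² ≠ 1; write [n] = (qⁿ − q⁻ⁿ)/(q − q⁻¹) for n ∈ ℤ. Then for all integers p and m, q^{p+m−5} · ( [−(p+m)] + [p+m+2] + [p−m+2] + [m−p+2] ) = q⁻⁵ · ( (q + q⁻¹)(q^{2p} + q^{2m}) + q^{2(p+m)+1} + q⁻¹ ). -/

import Mathlib

/-- The quantum integer `[n] = (qⁿ - q⁻ⁿ)/(q - q⁻¹)`. -/
def qint {F : Type*} [Field F] (q : F) (n : ℤ) : F :=
  (q ^ n - q ^ (-n)) / (q - q⁻¹)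

/-- for `q ≠ 0` with `q² ≠ 1` and all integers `p, m`,
`q^{p+m-5}·([-(p+m)] + [p+m+2] + [p-m+2] + [m-p+2])
  = q⁻⁵·((q + q⁻¹)(q^{2p} + q^{2m}) + q^{2(p+m)+1} + q⁻¹)`,
the identity underlying the structure coefficient `c(λ,ν)`. -/
theorem stmt10 {F : Type*} [Field F]
    (q : F) (hq : q ≠ 0) (hq2 : q ^ 2 ≠ 1) (p m : ℤ) :
    q ^ (p + m - 5) *
        (qint q (-(p + m)) + qint q (p + m + 2) + qint q (p - m + 2) +
          qint q (m - p + 2))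
      = q ^ (-5 : ℤ) *
        ((q + q⁻¹) * (q ^ (2 * p) + q ^ (2 * m)) + q ^ (2 * (p + m) + 1) + q⁻¹) := by
  have hden : q - q⁻¹ ≠ 0 := by
    intro h
    apply hq2
    have := sub_eq_zero.mp h
    field_simp at this
    linear_combination this
  unfold qint
  simp only [← add_div]
  rw [← mul_div_assoc, div_eq_iff hden]
  rw [show q + q⁻¹ = q ^ (1:ℤ) + q ^ (-1:ℤ) by simp,
      show q - q⁻¹ = q ^ (1:ℤ) - q ^ (-1:ℤ) by simp,
      show q⁻¹ = q ^ (-1:ℤ) by simp]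
  simp only [mul_sub, sub_mul, mul_add, add_mul, ← zpow_add₀ hq, neg_neg]
  ring_nf
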